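/- The function y ↦ y/√(Δ² + 4x²y) is concave on [0, ∞) for any fixed x, Δ ∈ ℝ with Δ ≠ 0. -/

import Mathlib

theorem stmt_6 (x Δ : ℝ) (hΔ : Δ ≠ 0) :
    ConcaveOn ℝ (Set.Ici 0) (fun y : ℝ => y / Real.sqrt (Δ^2 + 4*x^2*y)) := by
  set a : ℝ := Δ^2 with ha_def
  set b : ℝ := 4*x^2 with hb_def
  have ha : 0 < a := by positivity
  have hb : 0 ≤ b := by positivity
  have hs : ∀ y : ℝ, y ∈ Set.Ici (0:ℝ) → 0 < a + b*y := by
    intro y hy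
    have : 0 ≤ b*y := mul_nonneg hb hy
    linarith
  -- first and second derivatives
  refine concaveOn_of_hasDerivWithinAt2_nonpos (f' := fun y => (a + b*y/2) / (Real.sqrt (a + b*y))^3)
    (f'' := fun y => (b/2 * ((a + b*y) - 3*(a + b*y/2))) / (Real.sqrt (a + b*y))^5)
    (convex_Ici 0) ?_ ?_ ?_ ?_
  · -- continuity
    apply ContinuousOn.div continuousOn_id
    · exact (Real.continuous_sqrt.comp (by continuity)).continuousOn
    · intro y hy
      exact Real.sqrt_ne_zero'.2 (hs y hy)
  · intro y hy
    rw [interior_Ici] at hy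
    have hy0 : (0:ℝ) < y := hy
    have hsy : 0 < a + b*y := hs y (le_of_lt hy0)
    have hsq : 0 < Real.sqrt (a + b*y) := Real.sqrt_pos.2 hsy
    have hlin : HasDerivAt (fun y : ℝ => a + b*y) b y := by
      simpa using ((hasDerivAt_id y).const_mul b).const_add a
    have hsqrt : HasDerivAt (fun y : ℝ => Real.sqrt (a + b*y))
        (b / (2 * Real.sqrt (a + b*y))) y := hlin.sqrt (ne_of_gt hsy)
    have h := (hasDerivAt_id y).div hsqrt (ne_of_gt hsq)
    have heq : (1 * Real.sqrt (a + b*y) - y * (b / (2 * Real.sqrt (a + b*y)))) /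
        (Real.sqrt (a + b*y))^2 = (a + b*y/2) / (Real.sqrt (a + b*y))^3 := by
      set r := Real.sqrt (a + b*y) with hr_def
      have hr : r^2 = a + b*y := Real.sq_sqrt (le_of_lt hsy)
      have hrne : r ≠ 0 := ne_of_gt hsq
      have e1 : 1 * r - y * (b / (2*r)) = (2*r^2 - y*b) / (2*r) := by
        field_simp
      rw [e1, div_div, div_eq_div_iff (by positivity) (by positivity)]
      linear_combination (2*r^3) * hr
    simp only [id_eq] at h
    rw [heq] at h
    exact h.hasDerivWithinAt
  · intro y hy
    rw [interior_Ici] at hy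
    have hy0 : (0:ℝ) < y := hy
    have hsy : 0 < a + b*y := hs y (le_of_lt hy0)
    have hsq : 0 < Real.sqrt (a + b*y) := Real.sqrt_pos.2 hsy
    have hlin : HasDerivAt (fun y : ℝ => a + b*y) b y := by
      simpa using ((hasDerivAt_id y).const_mul b).const_add a
    have hsqrt : HasDerivAt (fun y : ℝ => Real.sqrt (a + b*y))
        (b / (2 * Real.sqrt (a + b*y))) y := hlin.sqrt (ne_of_gt hsy)
    have hnum : HasDerivAt (fun y : ℝ => a + b*y/2) (b/2) y := by
      simpa using (((hasDerivAt_id y).const_mul b).div_const 2).const_add a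
    have hden : HasDerivAt (fun y : ℝ => (Real.sqrt (a + b*y))^3)
        (3 * (Real.sqrt (a + b*y))^2 * (b / (2 * Real.sqrt (a + b*y)))) y := by
      simpa using hsqrt.fun_pow 3
    have h := hnum.div hden (by positivity)
    have hss : Real.sqrt (a + b*y) * Real.sqrt (a + b*y) = a + b*y :=
      Real.mul_self_sqrt (le_of_lt hsy)
    have heq : (b/2 * (Real.sqrt (a + b*y))^3 - (a + b*y/2) *
        (3 * (Real.sqrt (a + b*y))^2 * (b / (2 * Real.sqrt (a + b*y))))) /
        ((Real.sqrt (a + b*y))^3)^2 =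
        (b/2 * ((a + b*y) - 3*(a + b*y/2))) / (Real.sqrt (a + b*y))^5 := by
      set r := Real.sqrt (a + b*y) with hr_def
      have hr : r^2 = a + b*y := Real.sq_sqrt (le_of_lt hsy)
      have hrne : r ≠ 0 := ne_of_gt hsq
      have e1 : 3 * r^2 * (b / (2*r)) = 3*b/2 * r := by field_simp
      rw [e1]
      have e2 : b/2 * r^3 - (a + b*y/2) * (3*b/2 * r) = r * (b/2 * (r^2 - 3*(a + b*y/2))) := by
        ring
      have e3 : (r^3)^2 = r * r^5 := by ring
      rw [e2, e3, mul_div_mul_left _ _ hrne, hr]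
    rw [heq] at h
    exact h.hasDerivWithinAt
  · intro y hy
    rw [interior_Ici] at hy
    have hy0 : (0:ℝ) < y := hy
    have hsy : 0 < a + b*y := hs y (le_of_lt hy0)
    have hsq : 0 < Real.sqrt (a + b*y) := Real.sqrt_pos.2 hsy
    apply div_nonpos_of_nonpos_of_nonneg
    · have : (a + b*y) - 3*(a + b*y/2) = -2*a - b*y/2 := by ring
      rw [this]
      have h1 : 0 ≤ b*y := mul_nonneg hb (le_of_lt hy0)
      nlinarith
    · positivity
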